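/- For powers 0 < Pᵢ < Pⱼ and any channel gain g > 0, the smaller power is strictly better exactly above the threshold: u(Pᵢ; g) > u(Pⱼ; g) if and only if g > g₀*(Pᵢ, Pⱼ). -/
import Mathlib


/-- The single-band energy-efficiency utility `u(p; g) = exp(−cσ²/(p g))/p`. -/
noncomputable def u (c σ2 p g : ℝ) : ℝ :=
  Real.exp (-(c * σ2) / (p * g)) / p

/-- The decisional threshold between two power decisions. -/
noncomputable def g0 (c σ2 Pi Pj : ℝ) : ℝ :=
  c * σ2 * (1 / Pi - 1 / Pj) / (Real.log Pj - Real.log Pi)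

/-- For powers `0 < Pᵢ < Pⱼ` and any channel gain `g > 0`, the smaller power is
strictly better exactly above the threshold:
`u(Pᵢ; g) > u(Pⱼ; g) ↔ g > g₀*(Pᵢ, Pⱼ)`. -/
theorem smaller_power_better_iff (c σ2 Pi Pj g : ℝ) (hc : 0 < c) (hσ2 : 0 < σ2)
    (hPi : 0 < Pi) (hij : Pi < Pj) (hg : 0 < g) :
    u c σ2 Pi g > u c σ2 Pj g ↔ g > g0 c σ2 Pi Pj := by
  have hPj : 0 < Pj := hPi.trans hij
  have hL : 0 < Real.log Pj - Real.log Pi := sub_pos.2 (Real.log_lt_log hPi hij)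
  have e : -(c * σ2) / (Pi * g) + Real.log Pj - (-(c * σ2) / (Pj * g) + Real.log Pi)
      = (Real.log Pj - Real.log Pi) - c * σ2 * (1 / Pi - 1 / Pj) / g := by
    field_simp
    ring
  unfold u g0
  rw [gt_iff_lt, gt_iff_lt, div_lt_div_iff₀ hPj hPi,
      ← Real.log_lt_log_iff (by positivity) (by positivity),
      Real.log_mul (Real.exp_ne_zero _) hPi.ne',
      Real.log_mul (Real.exp_ne_zero _) hPj.ne',
      Real.log_exp, Real.log_exp, div_lt_iff₀ hL, ← sub_pos, e, sub_pos,
      div_lt_iff₀ hg, mul_comm g]
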